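/- Let φ : G → H be a continuous homomorphism with dense range between topological groups, and let (μ_i)_{i∈I} be a net of Borel probability measures on G UEB-converging to invariance over G. Then the push-forward net (φ_*(μ_i))_{i∈I} UEB-converges to invariance over H. -/

import Mathlib

open Filter Topology MeasureTheory Pointwise

/-- A net `(μ i)` of Borel probability measures on a topological group `G`
UEB-converges to invariance if, for every `g ∈ G` and every norm-bounded,
right-uniformly equicontinuous family `H` of bounded right-uniformly continuous
real-valued functions on `G`, `sup_{f ∈ H} |∫ f ∘ λ_g dμ_i − ∫ f dμ_i| → 0`. -/
def UEBConvergesToInvariance {G ι : Type*} [Group G] [TopologicalSpace G]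
    [MeasurableSpace G] (l : Filter ι) (μ : ι → Measure G) : Prop :=
  ∀ (g : G) (H : Set (G → ℝ)),
    (∃ C : ℝ, ∀ f ∈ H, ∀ x, |f x| ≤ C) →
    (∀ ε > 0, ∃ U ∈ 𝓝 (1 : G), ∀ f ∈ H, ∀ x y : G, y * x⁻¹ ∈ U → |f x - f y| ≤ ε) →
    ∀ ε > 0, ∀ᶠ i in l, ∀ f ∈ H,
      |∫ x, f (g * x) ∂(μ i) - ∫ x, f x ∂(μ i)| ≤ ε

/-- Push-forwards of a net UEB-converging to invariance along a continuous homomorphism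
with dense range UEB-converge to invariance over the codomain. -/
theorem stmt11 {G H ι : Type*} [Group G] [TopologicalSpace G] [IsTopologicalGroup G]
    [MeasurableSpace G] [BorelSpace G]
    [Group H] [TopologicalSpace H] [IsTopologicalGroup H]
    [MeasurableSpace H] [BorelSpace H]
    (φ : G →* H) (hcont : Continuous φ) (hdense : DenseRange φ)
    (l : Filter ι) (μ : ι → Measure G) (hprob : ∀ i, IsProbabilityMeasure (μ i))
    (hUEB : UEBConvergesToInvariance l μ) :
    UEBConvergesToInvariance l (fun i => (μ i).map φ) := by
  intro h F hbdd hEq ε hε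
  obtain ⟨C, hC⟩ := hbdd
  -- each f in F is continuous
  have hcontf : ∀ f ∈ F, Continuous f := by
    intro f hf
    rw [continuous_iff_continuousAt]
    intro x₀
    rw [ContinuousAt, Metric.tendsto_nhds]
    intro δ hδ
    obtain ⟨U, hU, hUf⟩ := hEq (δ/2) (by linarith)
    have hmem : {y : H | y * x₀⁻¹ ∈ U} ∈ 𝓝 x₀ := by
      have hc : Continuous fun y : H => y * x₀⁻¹ := continuous_id.mul continuous_const
      have := hc.continuousAt (x := x₀)
      apply this.preimage_mem_nhds
      simpa using hU
    filter_upwards [hmem] with y hy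
    have hb := hUf f hf x₀ y hy
    rw [Real.dist_eq]
    calc |f y - f x₀| = |f x₀ - f y| := abs_sub_comm _ _
      _ ≤ δ/2 := hb
      _ < δ := by linarith
  -- the pulled-back family
  set F' : Set (G → ℝ) := (fun f => f ∘ φ) '' F with hF'
  have hF'bdd : ∃ C : ℝ, ∀ f ∈ F', ∀ x, |f x| ≤ C := by
    refine ⟨C, ?_⟩
    rintro _ ⟨f, hf, rfl⟩ x
    exact hC f hf (φ x)
  have hF'eq : ∀ ε > 0, ∃ U ∈ 𝓝 (1 : G), ∀ f ∈ F', ∀ x y : G,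
      y * x⁻¹ ∈ U → |f x - f y| ≤ ε := by
    intro δ hδ
    obtain ⟨U, hU, hUf⟩ := hEq δ hδ
    refine ⟨φ ⁻¹' U, ?_, ?_⟩
    · have := hcont.continuousAt (x := (1 : G))
      apply this.preimage_mem_nhds
      simpa using hU
    · rintro _ ⟨f, hf, rfl⟩ x y hxy
      apply hUf f hf
      have : φ y * (φ x)⁻¹ = φ (y * x⁻¹) := by simp [map_mul, map_inv]
      rw [this]
      exact hxy
  -- choose g with φ g close to h
  obtain ⟨U₀, hU₀, hU₀f⟩ := hEq (ε/2) (by linarith)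
  have hopen : ∃ g : G, φ g * h⁻¹ ∈ interior U₀ := by
    have hne : ({k : H | k * h⁻¹ ∈ interior U₀} : Set H).Nonempty :=
      ⟨h, by simp [mem_interior_iff_mem_nhds.2 hU₀]⟩
    have hop : IsOpen {k : H | k * h⁻¹ ∈ interior U₀} :=
      isOpen_interior.preimage (continuous_id.mul continuous_const)
    obtain ⟨g, hg⟩ := hdense.exists_mem_open hop hne
    exact ⟨g, hg⟩
  obtain ⟨g, hg⟩ := hopen
  have hg' : φ g * h⁻¹ ∈ U₀ := interior_subset hg
  have hev := hUEB g F' hF'bdd hF'eq (ε/2) (by linarith)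
  filter_upwards [hev] with i hi f hf
  haveI := hprob i
  have hφm : AEMeasurable φ (μ i) := hcont.measurable.aemeasurable
  -- rewrite integrals over the pushforward
  have hrw1 : ∫ y, f (h * y) ∂((μ i).map φ) = ∫ x, f (h * φ x) ∂(μ i) :=
    integral_map hφm (((hcontf f hf).comp (continuous_const.mul continuous_id)).aestronglyMeasurable)
  have hrw2 : ∫ y, f y ∂((μ i).map φ) = ∫ x, f (φ x) ∂(μ i) :=
    integral_map hφm (hcontf f hf).aestronglyMeasurable
  simp only [hrw1, hrw2]
  -- integrability
  have hint : ∀ k : H, Integrable (fun x => f (k * φ x)) (μ i) := by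
    intro k
    refine ⟨((hcontf f hf).comp (continuous_const.mul hcont)).aestronglyMeasurable, ?_⟩
    apply MeasureTheory.HasFiniteIntegral.of_bounded (C := C)
    filter_upwards with x
    rw [Real.norm_eq_abs]
    exact hC f hf _
  -- pointwise closeness
  have hpt : ∀ x : G, |f (h * φ x) - f (φ g * φ x)| ≤ ε/2 := by
    intro x
    apply hU₀f f hf
    have : φ g * φ x * (h * φ x)⁻¹ = φ g * h⁻¹ := by group
    rw [this]
    exact hg'
  have key1 : |∫ x, f (h * φ x) ∂(μ i) - ∫ x, f (φ g * φ x) ∂(μ i)| ≤ ε/2 := by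
    rw [← integral_sub (hint h) (hint (φ g))]
    have hb : ∀ᵐ x ∂(μ i), ‖f (h * φ x) - f (φ g * φ x)‖ ≤ ε/2 := by
      filter_upwards with x
      rw [Real.norm_eq_abs]
      exact hpt x
    calc |∫ x, (f (h * φ x) - f (φ g * φ x)) ∂(μ i)|
        ≤ (ε/2) * ((μ i) Set.univ).toReal := norm_integral_le_of_norm_le_const hb
      _ = ε/2 := by simp
  have key2 : |∫ x, f (φ g * φ x) ∂(μ i) - ∫ x, f (φ x) ∂(μ i)| ≤ ε/2 := by
    have := hi (f ∘ φ) ⟨f, hf, rfl⟩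
    simpa [Function.comp, map_mul] using this
  calc |∫ x, f (h * φ x) ∂(μ i) - ∫ x, f (φ x) ∂(μ i)|
      ≤ |∫ x, f (h * φ x) ∂(μ i) - ∫ x, f (φ g * φ x) ∂(μ i)|
        + |∫ x, f (φ g * φ x) ∂(μ i) - ∫ x, f (φ x) ∂(μ i)| := abs_sub_le _ _ _
    _ ≤ ε/2 + ε/2 := add_le_add key1 key2
    _ = ε := by ring
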